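/- If f belongs to the class S*_B, then the second-order Toeplitz determinant of its logarithmic coefficients satisfies |γ_1² − γ_2²| ≤ 17/64; equivalently, |4·a_2² − a_2⁴ − 4·a_3² + 4·a_2²·a_3| ≤ 17/4, where γ_1 = a_2/2 and γ_2 = (a_3 − a_2²/2)/2. -/

import Mathlib

open Complex Metric

/-- The `n`-th Taylor coefficient of `f` at `0`. -/
noncomputable def taylorCoeff (f : ℂ → ℂ) (n : ℕ) : ℂ :=
  iteratedDeriv n f 0 / n.factorial

/-- Membership in the class `S*_B`: `f` is analytic on the unit disk, normalized by
`f(0) = 0` and `f'(0) = 1`, and there is a Schwarz function `w` with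
`z f'(z) (1 - log(1 + w z)) = f z` on the unit disk. -/
def IsSB (f : ℂ → ℂ) : Prop :=
  DifferentiableOn ℂ f (ball (0:ℂ) 1) ∧ f 0 = 0 ∧ deriv f 0 = 1 ∧
  ∃ w : ℂ → ℂ, DifferentiableOn ℂ w (ball (0:ℂ) 1) ∧ w 0 = 0 ∧
    (∀ z ∈ ball (0:ℂ) 1, ‖w z‖ < 1) ∧
    (∀ z ∈ ball (0:ℂ) 1, z * deriv f z * (1 - Complex.log (1 + w z)) = f z)

open Topology Filter

lemma zmul_aux {Q : ℂ → ℂ} (hQ : AnalyticOnNhd ℂ Q (ball (0:ℂ) 1)) :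
    deriv (deriv (fun z => z * Q z)) 0 = 2 * deriv Q 0 ∧
    deriv (deriv (deriv (fun z => z * Q z))) 0 = 3 * deriv (deriv Q) 0 := by
  have hQ' : AnalyticOnNhd ℂ (deriv Q) (ball 0 1) := hQ.deriv
  have hQ'' : AnalyticOnNhd ℂ (deriv (deriv Q)) (ball 0 1) := hQ'.deriv
  have hB : ball (0:ℂ) 1 ∈ 𝓝 (0:ℂ) := ball_mem_nhds _ one_pos
  have h0 : (0:ℂ) ∈ ball (0:ℂ) 1 := mem_ball_self one_pos
  have e1 : deriv (fun z => z * Q z) =ᶠ[𝓝 (0:ℂ)] fun z => Q z + z * deriv Q z := by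
    filter_upwards [hB] with z hz
    have h1 : HasDerivAt (fun y => y * Q y) (1 * Q z + z * deriv Q z) z :=
      (hasDerivAt_id z).mul ((hQ z hz).differentiableAt.hasDerivAt)
    rw [h1.deriv]; ring
  have e2 : deriv (fun z => Q z + z * deriv Q z) =ᶠ[𝓝 (0:ℂ)]
      fun z => deriv Q z + (deriv Q z + z * deriv (deriv Q) z) := by
    filter_upwards [hB] with z hz
    have h1 : HasDerivAt (fun y => Q y + y * deriv Q y)
        (deriv Q z + (1 * deriv Q z + z * deriv (deriv Q) z)) z :=
      ((hQ z hz).differentiableAt.hasDerivAt).add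
        ((hasDerivAt_id z).mul ((hQ' z hz).differentiableAt.hasDerivAt))
    rw [h1.deriv]; ring
  constructor
  · rw [e1.deriv_eq]
    have h1 : HasDerivAt (fun z => Q z + z * deriv Q z)
        (deriv Q 0 + (1 * deriv Q 0 + 0 * deriv (deriv Q) 0)) 0 :=
      ((hQ 0 h0).differentiableAt.hasDerivAt).add
        ((hasDerivAt_id 0).mul ((hQ' 0 h0).differentiableAt.hasDerivAt))
    rw [h1.deriv]; ring
  · rw [(e1.deriv).deriv_eq, e2.deriv_eq]
    have h1 : HasDerivAt (fun z => deriv Q z + (deriv Q z + z * deriv (deriv Q) z))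
        (deriv (deriv Q) 0 + (deriv (deriv Q) 0 +
          (1 * deriv (deriv Q) 0 + 0 * deriv (deriv (deriv Q)) 0))) 0 :=
      ((hQ' 0 h0).differentiableAt.hasDerivAt).add
        (((hQ' 0 h0).differentiableAt.hasDerivAt).add
          ((hasDerivAt_id 0).mul ((hQ'' 0 h0).differentiableAt.hasDerivAt)))
    rw [h1.deriv]; ring

lemma mobius_bound {a b : ℂ} (ha : ‖a‖ ≤ 1) (hb : ‖b‖ ≤ 1) :
    ‖a - b‖ ≤ ‖1 - (starRingEnd ℂ) b * a‖ := by
  have hna : normSq a ≤ 1 := by rw [← Complex.sq_norm]; nlinarith [norm_nonneg a]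
  have hnb : normSq b ≤ 1 := by rw [← Complex.sq_norm]; nlinarith [norm_nonneg b]
  have key : normSq (1 - (starRingEnd ℂ) b * a) - normSq (a - b)
      = (1 - normSq a) * (1 - normSq b) := by
    simp only [Complex.normSq_apply, Complex.sub_re, Complex.sub_im, Complex.mul_re,
      Complex.mul_im, Complex.one_re, Complex.one_im, Complex.conj_re, Complex.conj_im]
    ring
  rw [Complex.norm_def, Complex.norm_def]
  apply Real.sqrt_le_sqrt
  nlinarith [Complex.normSq_nonneg a, Complex.normSq_nonneg b]

lemma schwarz_pick_zero {g : ℂ → ℂ} (hgd : DifferentiableOn ℂ g (ball (0:ℂ) 1))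
    (hg1 : ∀ z ∈ ball (0:ℂ) 1, ‖g z‖ ≤ 1) :
    ‖deriv g 0‖ ≤ 1 - (‖g 0‖) ^ 2 := by
  have h0 : (0:ℂ) ∈ ball (0:ℂ) 1 := mem_ball_self one_pos
  have hB : ball (0:ℂ) 1 ∈ 𝓝 (0:ℂ) := ball_mem_nhds _ one_pos
  have hb1 : ‖g 0‖ ≤ 1 := hg1 0 h0
  rcases lt_or_eq_of_le hb1 with hlt | heq1
  · -- |g 0| < 1 : Möbius transform
    set b := g 0 with hbdef
    have hnb : normSq b < 1 := by
      rw [← Complex.sq_norm]; nlinarith [norm_nonneg b]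
    have hden : ∀ z ∈ ball (0:ℂ) 1, (1 : ℂ) - (starRingEnd ℂ) b * g z ≠ 0 := by
      intro z hz
      have : ‖(starRingEnd ℂ) b * g z‖ < 1 := by
        rw [norm_mul, Complex.norm_conj]
        nlinarith [norm_nonneg (g z), hg1 z hz, norm_nonneg b]
      intro hc
      rw [sub_eq_zero] at hc
      rw [← hc] at this
      simp at this
    set h : ℂ → ℂ := fun z => (g z - b) / (1 - (starRingEnd ℂ) b * g z) with hdef
    have hhd : DifferentiableOn ℂ h (ball (0:ℂ) 1) := by
      apply DifferentiableOn.div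
      · exact hgd.sub (differentiableOn_const _)
      · exact (differentiableOn_const _).sub ((differentiableOn_const _).mul hgd)
      · exact hden
    have hh0 : h 0 = 0 := by simp [hdef, hbdef]
    have hh1 : ∀ z ∈ ball (0:ℂ) 1, ‖h z‖ ≤ 1 := by
      intro z hz
      rw [hdef]
      simp only [norm_div]
      rw [div_le_one_iff]
      left
      constructor
      · exact (norm_pos_iff.mpr (hden z hz))
      · exact mobius_bound (hg1 z hz) hb1
    -- derivative bound via Schwarz
    have hdh : ∀ ε : ℝ, 0 < ε → ‖deriv h 0‖ ≤ 1 + ε := by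
      intro ε hε
      have maps : Set.MapsTo h (ball (0:ℂ) 1) (ball (h 0) (1 + ε)) := by
        intro z hz
        rw [hh0, mem_ball, dist_zero_right]
        calc ‖h z‖ ≤ 1 := hh1 z hz
        _ < 1 + ε := by linarith
      have := Complex.norm_deriv_le_div_of_mapsTo_ball hhd (maps.mono_right ball_subset_closedBall) one_pos
      simpa using this
    have hdh1 : ‖deriv h 0‖ ≤ 1 := le_of_forall_pos_le_add fun ε hε => hdh ε hε
    -- compute deriv h 0
    have hg' : HasDerivAt g (deriv g 0) 0 := (hgd.differentiableAt hB).hasDerivAt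
    have hnum : HasDerivAt (fun z => g z - b) (deriv g 0) 0 := hg'.sub_const b
    have hden' : HasDerivAt (fun z => (1:ℂ) - (starRingEnd ℂ) b * g z)
        (-((starRingEnd ℂ) b * deriv g 0)) 0 := by
      exact (hg'.const_mul ((starRingEnd ℂ) b)).const_sub (1:ℂ)
    have hden0 : (1:ℂ) - (starRingEnd ℂ) b * g 0 ≠ 0 := hden 0 h0
    have hdiv : HasDerivAt h
        ((deriv g 0 * (1 - (starRingEnd ℂ) b * g 0) - (g 0 - b) * (-((starRingEnd ℂ) b * deriv g 0)))
          / (1 - (starRingEnd ℂ) b * g 0) ^ 2) 0 := hnum.div hden' hden0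
    have hval : deriv h 0 = deriv g 0 / (1 - (starRingEnd ℂ) b * b) := by
      rw [hdiv.deriv, ← hbdef]
      have hd0 : (1:ℂ) - (starRingEnd ℂ) b * b ≠ 0 := by rw [hbdef]; exact hden0
      field_simp
      ring
    have habs : ‖(1:ℂ) - (starRingEnd ℂ) b * b‖ = 1 - normSq b := by
      have h1 : (1:ℂ) - (starRingEnd ℂ) b * b = ((1 - normSq b : ℝ) : ℂ) := by
        push_cast
        rw [Complex.normSq_eq_conj_mul_self]
      rw [h1, Complex.norm_real, Real.norm_of_nonneg (by linarith)]
    have := hdh1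
    rw [hval, norm_div, habs] at this
    have h2 : ‖deriv g 0‖ ≤ 1 - normSq b := by
      rw [div_le_one (by linarith)] at this
      linarith
    rw [← hbdef] at *
    calc ‖deriv g 0‖ ≤ 1 - normSq b := h2
    _ = 1 - ‖b‖ ^ 2 := by rw [Complex.sq_norm]
  · -- |g 0| = 1 : maximum modulus, g constant
    have hmax : IsMaxOn (norm ∘ g) (ball (0:ℂ) 1) 0 := by
      intro z hz
      simp only [Function.comp_apply, Set.mem_setOf_eq]
      exact (hg1 z hz).trans heq1.ge
    have hconst : Set.EqOn g (Function.const ℂ (g 0)) (ball (0:ℂ) 1) :=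
      Complex.eqOn_of_isPreconnected_of_isMaxOn_norm
        (convex_ball _ _).isPreconnected isOpen_ball hgd h0 hmax
    have : deriv g 0 = 0 := by
      have heq : g =ᶠ[𝓝 (0:ℂ)] Function.const ℂ (g 0) := hconst.eventuallyEq_of_mem hB
      rw [heq.deriv_eq]
      exact deriv_const _ _
    rw [this, heq1]
    simp

theorem toeplitz_log_coeff (f : ℂ → ℂ) (hf : IsSB f) :
    ‖(taylorCoeff f 2 / 2) ^ 2 -
        ((taylorCoeff f 3 - (taylorCoeff f 2) ^ 2 / 2) / 2) ^ 2‖ ≤ 17 / 64 ∧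
    ‖4 * (taylorCoeff f 2) ^ 2 - (taylorCoeff f 2) ^ 4 -
        4 * (taylorCoeff f 3) ^ 2 + 4 * (taylorCoeff f 2) ^ 2 * taylorCoeff f 3‖ ≤ 17 / 4 := by
  obtain ⟨hfd, hf0, hf1, w, hwd, hw0, hwb, heqn⟩ := hf
  have hB : ball (0:ℂ) 1 ∈ 𝓝 (0:ℂ) := ball_mem_nhds _ one_pos
  have h0 : (0:ℂ) ∈ ball (0:ℂ) 1 := mem_ball_self one_pos
  have hfa : AnalyticOnNhd ℂ f (ball (0:ℂ) 1) := hfd.analyticOnNhd isOpen_ball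
  have hwa : AnalyticOnNhd ℂ w (ball (0:ℂ) 1) := hwd.analyticOnNhd isOpen_ball
  set L : ℂ → ℂ := fun z => Complex.log (1 + w z) with hLdef
  have hslit : ∀ z ∈ ball (0:ℂ) 1, 1 + w z ∈ slitPlane := fun z hz =>
    mem_slitPlane_of_norm_lt_one (by simpa using hwb z hz)
  have hLa : AnalyticOnNhd ℂ L (ball (0:ℂ) 1) := by
    intro z hz
    have h1 : AnalyticAt ℂ (fun z => 1 + w z) z := analyticAt_const.add (hwa z hz)
    exact h1.clog (hslit z hz)
  set Q : ℂ → ℂ := fun z => deriv f z * (1 - L z) with hQdef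
  have hQa : AnalyticOnNhd ℂ Q (ball (0:ℂ) 1) := (hfa.deriv).mul (analyticOnNhd_const.sub hLa)
  have hPf : (fun z => z * Q z) =ᶠ[𝓝 (0:ℂ)] f := by
    filter_upwards [hB] with z hz
    rw [hQdef]
    simp only
    rw [← mul_assoc]
    exact heqn z hz
  set c1 : ℂ := deriv w 0 with hc1def
  set d2 : ℂ := deriv (deriv w) 0 with hd2def
  set A2 : ℂ := deriv (deriv f) 0 with hA2def
  set A3 : ℂ := deriv (deriv (deriv f)) 0 with hA3def
  have hw' : HasDerivAt w c1 0 := (hwa 0 h0).differentiableAt.hasDerivAt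
  have hL0 : L 0 = 0 := by simp [hLdef, hw0]
  have haux1 : HasDerivAt (fun z => 1 + w z) c1 0 := by
    exact hw'.const_add (1:ℂ)
  have hL'0 : deriv L 0 = c1 := by
    have h2 := (haux1.clog (hslit 0 h0)).deriv
    rw [hLdef]
    rw [h2]
    simp [hw0]
  have hLev : deriv L =ᶠ[𝓝 (0:ℂ)] fun z => deriv w z / (1 + w z) := by
    filter_upwards [hB] with z hz
    have hwz : HasDerivAt w (deriv w z) z := (hwa z hz).differentiableAt.hasDerivAt
    have h1 : HasDerivAt (fun y => 1 + w y) (deriv w z) z := by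
      exact hwz.const_add (1:ℂ)
    exact (h1.clog (hslit z hz)).deriv
  have hL''0 : deriv (deriv L) 0 = d2 - c1 ^ 2 := by
    rw [hLev.deriv_eq]
    have hw'' : HasDerivAt (deriv w) d2 0 := (hwa.deriv 0 h0).differentiableAt.hasDerivAt
    have hne : (1 : ℂ) + w 0 ≠ 0 := by simp [hw0]
    rw [HasDerivAt.deriv (f := fun z => deriv w z / (1 + w z)) (hw''.div haux1 hne)]
    rw [hw0]
    rw [← hc1def]
    field_simp
    ring
  -- derivative values of Q
  have hf2 : HasDerivAt (deriv f) A2 0 := (hfa.deriv 0 h0).differentiableAt.hasDerivAt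
  have hLd : HasDerivAt L (c1) 0 := by
    have := (hLa 0 h0).differentiableAt.hasDerivAt
    rwa [hL'0] at this
  have hC : HasDerivAt (fun z => 1 - L z) (-c1) 0 := by
    exact hLd.const_sub (1:ℂ)
  have hQ'0 : deriv Q 0 = A2 - c1 := by
    rw [hQdef, HasDerivAt.deriv (f := fun z => deriv f z * (1 - L z)) (hf2.mul hC), hL0, hf1]
    ring
  have hQev : deriv Q =ᶠ[𝓝 (0:ℂ)]
      fun z => deriv (deriv f) z * (1 - L z) + deriv f z * (-(deriv L z)) := by
    filter_upwards [hB] with z hz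
    have h1 : HasDerivAt (deriv f) (deriv (deriv f) z) z :=
      (hfa.deriv z hz).differentiableAt.hasDerivAt
    have h2 : HasDerivAt L (deriv L z) z := (hLa z hz).differentiableAt.hasDerivAt
    have h3 : HasDerivAt (fun y => 1 - L y) (-(deriv L z)) z := by
      exact h2.const_sub (1:ℂ)
    rw [hQdef, HasDerivAt.deriv (f := fun y => deriv f y * (1 - L y)) (h1.mul h3)]
  have hQ''0 : deriv (deriv Q) 0 = A3 - 2 * A2 * c1 - (d2 - c1 ^ 2) := by
    rw [hQev.deriv_eq]
    have h1 : HasDerivAt (deriv (deriv f)) A3 0 :=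
      (hfa.deriv.deriv 0 h0).differentiableAt.hasDerivAt
    have h2 : HasDerivAt (fun z => -(deriv L z)) (-(deriv (deriv L) 0)) 0 :=
      ((hLa.deriv 0 h0).differentiableAt.hasDerivAt).neg
    have h4 : HasDerivAt (fun z => deriv L z) (deriv (deriv L) 0) 0 :=
      (hLa.deriv 0 h0).differentiableAt.hasDerivAt
    have h3 : HasDerivAt (fun y => 1 - L y) (-c1) 0 := hC
    have hsum := HasDerivAt.deriv
      (f := fun z => deriv (deriv f) z * (1 - L z) + deriv f z * -deriv L z) ((h1.mul h3).add (hf2.mul h2))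
    rw [hsum, hL0, hL'0, hL''0, hf1]
    ring
  -- coefficient relations
  obtain ⟨k2, k3⟩ := zmul_aux hQa
  have hd2f : deriv (deriv f) =ᶠ[𝓝 (0:ℂ)] deriv (deriv (fun z => z * Q z)) :=
    (hPf.symm.deriv).deriv
  have e2 : A2 = 2 * (A2 - c1) := by
    calc A2 = deriv (deriv f) 0 := hA2def
    _ = deriv (deriv (fun z => z * Q z)) 0 := hd2f.self_of_nhds
    _ = 2 * deriv Q 0 := k2
    _ = 2 * (A2 - c1) := by rw [hQ'0]
  have e3 : A3 = 3 * (A3 - 2 * A2 * c1 - (d2 - c1 ^ 2)) := by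
    calc A3 = deriv (deriv (deriv f)) 0 := hA3def
    _ = deriv (deriv (deriv (fun z => z * Q z))) 0 := (hd2f.deriv).self_of_nhds
    _ = 3 * deriv (deriv Q) 0 := k3
    _ = 3 * (A3 - 2 * A2 * c1 - (d2 - c1 ^ 2)) := by rw [hQ''0]
  have hA2v : A2 = 2 * c1 := by linear_combination -e2
  have hA3v : A3 = (9 * c1 ^ 2 + 3 * d2) / 2 := by
    linear_combination (-1/2 : ℂ) * e3 + 3 * c1 * hA2v
  have ht2 : taylorCoeff f 2 = c1 := by
    rw [taylorCoeff]
    rw [show (2:ℕ) = 1 + 1 from rfl, iteratedDeriv_succ, iteratedDeriv_one]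
    rw [← hA2def, hA2v]
    have hfac : ((Nat.factorial 2 : ℕ) : ℂ) = 2 := by norm_num [Nat.factorial]
    rw [hfac]
    ring
  have ht3 : taylorCoeff f 3 = (3 * c1 ^ 2 + d2) / 4 := by
    rw [taylorCoeff]
    rw [show iteratedDeriv 3 f = iteratedDeriv (1 + 1 + 1) f from rfl, iteratedDeriv_succ, iteratedDeriv_succ,
      iteratedDeriv_one]
    rw [← hA3def, hA3v]
    have hfac : ((Nat.factorial 3 : ℕ) : ℂ) = 6 := by norm_num [Nat.factorial]
    rw [hfac]
    ring
  -- Schwarz bounds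
  have hmaps : Set.MapsTo w (ball (0:ℂ) 1) (ball (w 0) 1) := by
    intro z hz
    rw [hw0, mem_ball, dist_zero_right]
    exact hwb z hz
  have hgd : DifferentiableOn ℂ (dslope w 0) (ball (0:ℂ) 1) :=
    (differentiableOn_dslope hB).mpr hwd
  have hg1 : ∀ z ∈ ball (0:ℂ) 1, ‖dslope w 0 z‖ ≤ 1 := by
    intro z hz
    have := Complex.norm_dslope_le_div_of_mapsTo_ball hwd (hmaps.mono_right ball_subset_closedBall) hz
    simpa using this
  have hg0 : dslope w 0 0 = c1 := dslope_same w 0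
  have hc1le : ‖c1‖ ≤ 1 := by
    have := hg1 0 h0
    rwa [hg0] at this
  have hwfun : w = fun z => z * dslope w 0 z := by
    funext z
    have h := sub_smul_dslope w 0 z
    rw [sub_zero, hw0, sub_zero, smul_eq_mul] at h
    exact h.symm
  have hga : AnalyticOnNhd ℂ (dslope w 0) (ball (0:ℂ) 1) := hgd.analyticOnNhd isOpen_ball
  have hd2v : d2 = 2 * deriv (dslope w 0) 0 := by
    have h := (zmul_aux hga).1
    rw [← hwfun] at h
    rw [hd2def, h]
  have hsp : ‖deriv (dslope w 0) 0‖ ≤ 1 - ‖c1‖ ^ 2 := by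
    have := schwarz_pick_zero hgd hg1
    rwa [hg0] at this
  set c2 : ℂ := deriv (dslope w 0) 0 with hc2def
  have hd2c2 : d2 = 2 * c2 := hd2v
  -- final numeric estimates
  set x : ℝ := ‖c1‖ with hxdef
  set y : ℝ := ‖c2‖ with hydef
  have hx0 : 0 ≤ x := norm_nonneg _
  have hy0 : 0 ≤ y := norm_nonneg _
  have hx1 : x ≤ 1 := hc1le
  have hy1 : y ≤ 1 - x ^ 2 := hsp
  have hEeq : 4 * (taylorCoeff f 2) ^ 2 - (taylorCoeff f 2) ^ 4 -
      4 * (taylorCoeff f 3) ^ 2 + 4 * (taylorCoeff f 2) ^ 2 * taylorCoeff f 3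
      = 4 * c1 ^ 2 - c1 ^ 4 / 4 - c1 ^ 2 * c2 - c2 ^ 2 := by
    rw [ht2, ht3, hd2c2]
    ring
  have tri : ‖4 * c1 ^ 2 - c1 ^ 4 / 4 - c1 ^ 2 * c2 - c2 ^ 2‖
      ≤ 4 * x ^ 2 + x ^ 4 / 4 + x ^ 2 * y + y ^ 2 := by
    have t1 : ‖4 * c1 ^ 2 - c1 ^ 4 / 4 - c1 ^ 2 * c2 - c2 ^ 2‖
        ≤ ‖4 * c1 ^ 2‖ + ‖c1 ^ 4 / 4‖ +
          ‖c1 ^ 2 * c2‖ + ‖c2 ^ 2‖ := by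
      calc ‖4 * c1 ^ 2 - c1 ^ 4 / 4 - c1 ^ 2 * c2 - c2 ^ 2‖
          ≤ ‖4 * c1 ^ 2 - c1 ^ 4 / 4 - c1 ^ 2 * c2‖ + ‖c2 ^ 2‖ := norm_sub_le _ _
        _ ≤ ‖4 * c1 ^ 2 - c1 ^ 4 / 4‖ + ‖c1 ^ 2 * c2‖ + ‖c2 ^ 2‖ := by
            gcongr; exact norm_sub_le _ _
        _ ≤ ‖4 * c1 ^ 2‖ + ‖c1 ^ 4 / 4‖ + ‖c1 ^ 2 * c2‖ + ‖c2 ^ 2‖ := by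
            gcongr ?_ + _ + _; exact norm_sub_le _ _
    have v1 : ‖4 * c1 ^ 2‖ = 4 * x ^ 2 := by
      rw [norm_mul, norm_pow]; norm_num [hxdef]
    have v2 : ‖c1 ^ 4 / 4‖ = x ^ 4 / 4 := by
      rw [norm_div, norm_pow]; norm_num [hxdef]
    have v3 : ‖c1 ^ 2 * c2‖ = x ^ 2 * y := by
      rw [norm_mul, norm_pow]
    have v4 : ‖c2 ^ 2‖ = y ^ 2 := by rw [norm_pow]
    rw [v1, v2, v3, v4] at t1
    exact t1
  have hnum : 4 * x ^ 2 + x ^ 4 / 4 + x ^ 2 * y + y ^ 2 ≤ 17 / 4 := by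
    have h1 : y ^ 2 ≤ (1 - x ^ 2) ^ 2 := by nlinarith
    have h2 : x ^ 2 * y ≤ x ^ 2 * (1 - x ^ 2) := by nlinarith
    nlinarith [sq_nonneg x, sq_nonneg (x ^ 2), pow_le_one₀ hx0 hx1 (n := 2),
      pow_le_one₀ hx0 hx1 (n := 4)]
  have main2 : ‖4 * (taylorCoeff f 2) ^ 2 - (taylorCoeff f 2) ^ 4 -
      4 * (taylorCoeff f 3) ^ 2 + 4 * (taylorCoeff f 2) ^ 2 * taylorCoeff f 3‖ ≤ 17 / 4 := by
    rw [hEeq]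
    exact tri.trans hnum
  refine ⟨?_, main2⟩
  have hfrac : (taylorCoeff f 2 / 2) ^ 2 -
      ((taylorCoeff f 3 - (taylorCoeff f 2) ^ 2 / 2) / 2) ^ 2
      = (4 * (taylorCoeff f 2) ^ 2 - (taylorCoeff f 2) ^ 4 -
        4 * (taylorCoeff f 3) ^ 2 + 4 * (taylorCoeff f 2) ^ 2 * taylorCoeff f 3) / 16 := by
    ring
  rw [hfrac, norm_div]
  have h16 : ‖(16:ℂ)‖ = 16 := by norm_num
  rw [h16]
  linarith
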